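/- There exists an infinite integer payoff sequence ρ such that ρ does not satisfy BWMP(0) (for every L ≥ 1, ρ does not satisfy FWMP(L, 0)), yet for every ε > 0 there exists L ≥ 1 such that ρ satisfies FWMP(L, -ε); hence the BWMP-value of ρ equals 0 while ρ ∉ BWMP(0). -/

import Mathlib

def FWMP (w : ℕ → ℤ) (L : ℕ) (lam : ℝ) : Prop :=
  ∃ k : ℕ, ∀ i ≥ k, ∃ j : ℕ, 1 ≤ j ∧ j ≤ L ∧
    (∑ m ∈ Finset.Ico i (i + j), (w m : ℝ)) / (j : ℝ) ≥ lam

noncomputable def FWMPvalue (w : ℕ → ℤ) (L : ℕ) : ℝ := sSup {lam : ℝ | FWMP w L lam}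

def BWMP (w : ℕ → ℤ) (lam : ℝ) : Prop := ∃ L : ℕ, 1 ≤ L ∧ FWMP w L lam

noncomputable def BWMPvalue (w : ℕ → ℤ) : ℝ := sSup {lam : ℝ | BWMP w lam}

open Classical in
noncomputable def rho : ℕ → ℤ := fun n => if ∃ a, n = 2^a then -1 else 0

open Classical in
lemma sum_rho (s : Finset ℕ) :
    ∑ m ∈ s, (rho m : ℝ) = -((s.filter (fun m => ∃ a, m = 2^a)).card : ℝ) := by
  have h : ∀ m, (rho m : ℝ) = if ∃ a, m = 2^a then (-1:ℝ) else 0 := by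
    intro m; unfold rho; split_ifs <;> simp
  simp_rw [h]
  rw [← Finset.sum_filter, Finset.sum_const]
  simp

open Classical in
-- an interval [i, i+L) with L ≤ i contains at most one power of 2
lemma card_filter_le_one {i L : ℕ} (hiL : L ≤ i) :
    ((Finset.Ico i (i+L)).filter (fun m => ∃ a, m = 2^a)).card ≤ 1 := by
  rw [Finset.card_le_one]
  intro x hx y hy
  simp only [Finset.mem_filter, Finset.mem_Ico] at hx hy
  obtain ⟨⟨hx1, hx2⟩, a, rfl⟩ := hx
  obtain ⟨⟨hy1, hy2⟩, b, rfl⟩ := hy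
  have key : ∀ c d : ℕ, i ≤ 2^c → 2^d < i + L → d ≤ c := by
    intro c d hc hd
    have h2 : (2:ℕ)^d < 2^(c+1) := by
      calc (2:ℕ)^d < i + L := hd
        _ ≤ 2^c + 2^c := by omega
        _ = 2^(c+1) := by ring
    have := (Nat.pow_lt_pow_iff_right (by norm_num : 1 < 2)).mp h2
    omega
  have hab : a = b := le_antisymm (key b a hy1 hx2) (key a b hx1 hy2)
  rw [hab]

theorem stmt4 :
    ∃ ρ : ℕ → ℤ,
      (∀ L : ℕ, 1 ≤ L → ¬ FWMP ρ L 0) ∧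
      (∀ ε : ℝ, 0 < ε → ∃ L : ℕ, 1 ≤ L ∧ FWMP ρ L (-ε)) ∧
      BWMPvalue ρ = 0 ∧ ¬ BWMP ρ 0 := by
  classical
  have h1 : ∀ L : ℕ, 1 ≤ L → ¬ FWMP rho L 0 := by
    rintro L hL ⟨k, hk⟩
    obtain ⟨j, hj1, hjL, havg⟩ := hk (2^k) (Nat.lt_two_pow_self (n := k)).le
    have hsum : ∑ m ∈ Finset.Ico (2^k) (2^k + j), (rho m : ℝ)
        = -(((Finset.Ico (2^k) (2^k+j)).filter (fun m => ∃ a, m = 2^a)).card : ℝ) :=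
      sum_rho _
    have hmem : (2^k) ∈ (Finset.Ico (2^k) (2^k+j)).filter (fun m => ∃ a, m = 2^a) := by
      simp only [Finset.mem_filter, Finset.mem_Ico]
      exact ⟨⟨le_refl _, by omega⟩, k, rfl⟩
    have hcard : 1 ≤ ((Finset.Ico (2^k) (2^k+j)).filter (fun m => ∃ a, m = 2^a)).card :=
      Finset.card_pos.mpr ⟨_, hmem⟩
    have hneg : ∑ m ∈ Finset.Ico (2^k) (2^k + j), (rho m : ℝ) < 0 := by
      rw [hsum]
      have : (1:ℝ) ≤ (((Finset.Ico (2^k) (2^k+j)).filter (fun m => ∃ a, m = 2^a)).card : ℝ) := by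
        exact_mod_cast hcard
      linarith
    have hjpos : (0:ℝ) < (j:ℝ) := by exact_mod_cast hj1
    have := div_neg_of_neg_of_pos hneg hjpos
    linarith [havg]
  have h2 : ∀ ε : ℝ, 0 < ε → ∃ L : ℕ, 1 ≤ L ∧ FWMP rho L (-ε) := by
    intro ε hε
    set L : ℕ := max 1 ⌈1/ε⌉₊ with hLdef
    have hL1 : 1 ≤ L := le_max_left _ _
    refine ⟨L, hL1, L, ?_⟩
    intro i hi
    refine ⟨L, hL1, le_refl _, ?_⟩
    have hsum : ∑ m ∈ Finset.Ico i (i + L), (rho m : ℝ)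
        = -(((Finset.Ico i (i+L)).filter (fun m => ∃ a, m = 2^a)).card : ℝ) :=
      sum_rho _
    have hcard := card_filter_le_one (i := i) (L := L) hi
    have hsum1 : (-1:ℝ) ≤ ∑ m ∈ Finset.Ico i (i + L), (rho m : ℝ) := by
      rw [hsum]
      have : (((Finset.Ico i (i+L)).filter (fun m => ∃ a, m = 2^a)).card : ℝ) ≤ 1 := by
        exact_mod_cast hcard
      linarith
    have hLpos : (0:ℝ) < (L:ℝ) := by exact_mod_cast hL1
    have hLge : 1/ε ≤ (L:ℝ) := by
      calc 1/ε ≤ (⌈1/ε⌉₊ : ℝ) := Nat.le_ceil _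
        _ ≤ (L:ℝ) := by exact_mod_cast le_max_right 1 ⌈1/ε⌉₊
    have h1L : (1:ℝ)/L ≤ ε := by
      rw [div_le_iff₀ hLpos]
      have := mul_le_mul_of_nonneg_left hLge hε.le
      rw [mul_one_div, div_self (ne_of_gt hε)] at this
      linarith
    have : (-ε) ≤ (-1:ℝ)/L := by
      rw [neg_div]
      linarith
    have hdiv : (-1:ℝ)/L ≤ (∑ m ∈ Finset.Ico i (i + L), (rho m : ℝ)) / L := by
      gcongr
    simp only [ge_iff_le]
    linarith
  have h4 : ¬ BWMP rho 0 := by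
    rintro ⟨L, hL, h⟩
    exact h1 L hL h
  have hset : {lam : ℝ | BWMP rho lam} = Set.Iio 0 := by
    ext lam
    simp only [Set.mem_setOf_eq, Set.mem_Iio]
    constructor
    · rintro ⟨L, hL, k, hk⟩
      by_contra hc
      push_neg at hc
      refine h1 L hL ⟨k, fun i hi => ?_⟩
      obtain ⟨j, hj1, hj2, hav⟩ := hk i hi
      exact ⟨j, hj1, hj2, le_trans hc hav⟩
    · intro h
      obtain ⟨L, hL, hf⟩ := h2 (-lam) (by linarith)
      rw [neg_neg] at hf
      exact ⟨L, hL, hf⟩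
  refine ⟨rho, h1, h2, ?_, h4⟩
  rw [BWMPvalue, hset]
  exact csSup_Iio
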